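/- Let n ≥ 2 and let (m₁,…,mₙ) be a nonzero vector in ℤⁿ with gcd(m₁,…,mₙ) = 1. Then there exist vectors v_i = (v_{i,1},…,v_{i,n}) ∈ ℤⁿ for 1 ≤ i ≤ n−1 such that |v_{i,j}| ≤ max(|m_j|, 1) for all 1 ≤ j ≤ n, and the vector (m₁,…,mₙ) together with the vectors v₁,…,v_{n−1} form a ℤ-basis of ℤⁿ. -/

import Mathlib

lemma gcd_split (k : ℕ) (m : Fin (k+1) → ℤ) :
    Finset.univ.gcd m = GCDMonoid.gcd (m 0) (Finset.univ.gcd (m ∘ Fin.succ)) := by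
  rw [Fin.univ_succ, Finset.cons_eq_insert, Finset.gcd_insert, Finset.map_eq_image,
    Finset.gcd_image]
  rfl

lemma aux : ∀ (k : ℕ) (m : Fin (k+1) → ℤ), Finset.univ.gcd m = 1 →
    ∃ v : Fin (k+1) → Fin (k+1) → ℤ,
      v 0 = m ∧
      (∀ i j : Fin (k+1), i ≠ 0 → |v i j| ≤ max |m j| 1) ∧
      IsUnit (Matrix.det (Matrix.of v)) := by
  intro k
  induction k with
  | zero =>
    intro m hgcd
    refine ⟨fun _ => m, rfl, fun i j hi => absurd (Fin.ext (by omega)) hi, ?_⟩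
    have hd : Matrix.det (Matrix.of fun _ => m) = m 0 := by
      rw [Matrix.det_fin_one]; rfl
    rw [hd]
    have h := gcd_split 0 m
    rw [hgcd] at h
    have h2 : Finset.univ.gcd (m ∘ Fin.succ) = 0 := by
      simp [Finset.gcd_eq_zero_iff]
    rw [h2, gcd_zero_right] at h
    exact normalize_eq_one.mp h.symm
  | succ k IH =>
    intro m hgcd
    have hsplit : GCDMonoid.gcd (m 0) (Finset.univ.gcd (m ∘ Fin.succ)) = 1 := by
      rw [← gcd_split]; exact hgcd
    set m' : Fin (k+1) → ℤ := m ∘ Fin.succ with hm'def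
    by_cases hg : Finset.univ.gcd m' = 0
    · -- all later entries vanish, m 0 is a unit
      have hz : ∀ j : Fin (k+1), m' j = 0 := fun j =>
        Finset.gcd_eq_zero_iff.mp hg j (Finset.mem_univ j)
      have hu : IsUnit (m 0) := by
        rw [hg, gcd_zero_right] at hsplit; exact normalize_eq_one.mp hsplit
      refine ⟨Fin.cons m (fun i => Pi.single i.succ 1), Fin.cons_zero _ _, ?_, ?_⟩
      · intro i j hi
        obtain ⟨i', rfl⟩ := Fin.exists_succ_eq.mpr hi
        rw [Fin.cons_succ]
        rcases eq_or_ne j i'.succ with rfl | hj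
        · simp
        · rw [Pi.single_eq_of_ne hj]
          simp
      · have hdiag : Matrix.of (Fin.cons m (fun i => Pi.single i.succ (1:ℤ))) =
            Matrix.diagonal (Fin.cons (m 0) 1) := by
          ext i j
          refine Fin.cases ?_ (fun i' => ?_) i
          · refine Fin.cases ?_ (fun j' => ?_) j
            · simp [Matrix.diagonal]
            · simpa [Matrix.diagonal, (Fin.succ_ne_zero j').symm, hm'def] using hz j'
          · refine Fin.cases ?_ (fun j' => ?_) j
            · simp [Matrix.diagonal, Fin.succ_ne_zero i']
            · rcases eq_or_ne i' j' with rfl | hij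
              · simp [Matrix.diagonal]
              · simp [Matrix.diagonal, Fin.succ_inj, hij,
                  Pi.single_eq_of_ne (fun h => hij (Fin.succ_injective _ h))]
        rw [hdiag, Matrix.det_diagonal]
        rw [Fin.prod_univ_succ]
        simpa using hu
    · -- main case
      have hdvd : ∀ j, Finset.univ.gcd m' ∣ m' j := fun j => Finset.gcd_dvd (Finset.mem_univ j)
      set g := Finset.univ.gcd m' with hgdef
      set m'' : Fin (k+1) → ℤ := fun j => m' j / g with hm''def
      have hmul : ∀ j, g * m'' j = m' j := fun j => Int.mul_ediv_cancel' (hdvd j)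
      obtain ⟨j0, hj0⟩ : ∃ j, m' j ≠ 0 := by
        by_contra h
        push_neg at h
        exact hg (Finset.gcd_eq_zero_iff.mpr fun x _ => h x)
      have hgcd'' : Finset.univ.gcd m'' = 1 :=
        Finset.gcd_div_eq_one (Finset.mem_univ j0) hj0
      obtain ⟨V, hV0, hVb, hVdet⟩ := IH m'' hgcd''
      -- Bezout coefficients
      have hbez : m 0 * Int.gcdA (m 0) g + g * Int.gcdB (m 0) g = 1 := by
        have h1 := Int.gcd_eq_gcd_ab (m 0) g
        have h2 : (Int.gcd (m 0) g : ℤ) = 1 := by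
          rw [Int.coe_gcd]; exact hsplit
        rw [h2] at h1
        linarith
      set G := |g| with hGdef
      have hGpos : 0 < G := abs_pos.mpr hg
      set a := Int.gcdA (m 0) g % G with hadef
      have ha0 : 0 ≤ a := Int.emod_nonneg _ (ne_of_gt hGpos)
      have haG : a < G := Int.emod_lt_of_pos _ hGpos
      have hgG : g ∣ G := (dvd_abs g g).mpr dvd_rfl
      have hdvd1 : g ∣ m 0 * a - 1 := by
        have h1 : G ∣ (Int.gcdA (m 0) g - a) :=
          ⟨Int.gcdA (m 0) g / G, by rw [hadef, Int.emod_def]; ring⟩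
        have h2 : g ∣ (Int.gcdA (m 0) g - a) := hgG.trans h1
        obtain ⟨c, hc⟩ := h2
        exact ⟨-m 0 * c - Int.gcdB (m 0) g, by linear_combination -m 0 * hc + hbez⟩
      set b := (m 0 * a - 1) / g with hbdef
      have hgb : g * b = m 0 * a - 1 := Int.mul_ediv_cancel' hdvd1
      have key : a * m 0 - b * g = 1 := by linear_combination -hgb
      have habs : ∀ j', |m'' j'| ≤ |m' j'| := by
        intro j'
        rw [← hmul j', abs_mul]
        exact le_mul_of_one_le_left (abs_nonneg _) (by omega : (1:ℤ) ≤ |g|)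
      have hGm : ∀ j', G * |m'' j'| = |m' j'| := fun j' => by
        rw [← hmul j', abs_mul]
      refine ⟨Fin.cons m (Fin.cons (Fin.cons b (fun j => a * m'' j))
          (fun i => Fin.cons 0 (V i.succ))), Fin.cons_zero _ _, ?_, ?_⟩
      · intro i j hi
        obtain ⟨i', rfl⟩ := Fin.exists_succ_eq.mpr hi
        rw [Fin.cons_succ]
        refine Fin.cases ?_ (fun i'' => ?_) i'
        · rw [Fin.cons_zero]
          refine Fin.cases ?_ (fun j' => ?_) j
          · rw [Fin.cons_zero]
            -- |b| ≤ max |m 0| 1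
            have h1 : G * |b| = |m 0 * a - 1| := by rw [← hgb, abs_mul]
            have h2 : |m 0 * a - 1| ≤ max |m 0| 1 * G := by
              have h3 : |m 0 * a - 1| ≤ |m 0| * a + 1 := by
                calc |m 0 * a - 1| ≤ |m 0 * a| + |(1:ℤ)| := abs_sub _ _
                  _ = |m 0| * a + 1 := by rw [abs_mul, abs_of_nonneg ha0]; norm_num
              have h4 : |m 0| ≤ max |m 0| 1 := le_max_left _ _
              have h5 : (1:ℤ) ≤ max |m 0| 1 := le_max_right _ _
              nlinarith [abs_nonneg (m 0)]
            nlinarith [abs_nonneg b]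
          · rw [Fin.cons_succ]
            have h1 : |a * m'' j'| ≤ G * |m'' j'| := by
              rw [abs_mul, abs_of_nonneg ha0]
              exact mul_le_mul_of_nonneg_right haG.le (abs_nonneg _)
            calc |a * m'' j'| ≤ |m' j'| := by rw [← hGm j']; exact h1
              _ ≤ max |m j'.succ| 1 := le_max_left _ _
        · rw [Fin.cons_succ]
          refine Fin.cases ?_ (fun j' => ?_) j
          · rw [Fin.cons_zero]
            simp [le_max_iff]
          · rw [Fin.cons_succ]
            calc |V i''.succ j'| ≤ max |m'' j'| 1 := hVb _ _ (Fin.succ_ne_zero _)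
              _ ≤ max |m j'.succ| 1 := max_le_max (habs j') le_rfl
      · -- determinant
        set w : Fin (k+2) → Fin (k+2) → ℤ := Fin.cons m (Fin.cons (Fin.cons b
          (fun j => a * m'' j)) (fun i => Fin.cons 0 (V i.succ))) with hwdef
        have hminor0 : (Matrix.of w).submatrix (Fin.succAbove 0) Fin.succ =
            (Matrix.of V).updateRow 0 (a • m'') := by
          ext i j
          refine Fin.cases ?_ (fun i'' => ?_) i
          · simp [hwdef, Fin.succAbove_zero]
          · simp [hwdef, Fin.succAbove_zero, Matrix.updateRow_ne (Fin.succ_ne_zero i'')]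
        have hminor1 : (Matrix.of w).submatrix (Fin.succAbove (Fin.succ 0)) Fin.succ =
            (Matrix.of V).updateRow 0 (g • m'') := by
          ext i j
          refine Fin.cases ?_ (fun i'' => ?_) i
          · simp only [hwdef, Matrix.submatrix_apply, Fin.succ_succAbove_zero, Fin.cons_zero,
              Matrix.of_apply, Matrix.updateRow_self, Pi.smul_apply, smul_eq_mul, hmul]
            rfl
          · simp [hwdef, Fin.succ_succAbove_succ, Matrix.updateRow_ne (Fin.succ_ne_zero i'')]
        have hdet0 : ((Matrix.of V).updateRow 0 (a • m'')).det = a * (Matrix.of V).det := by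
          have : (a • m'') = a • (Matrix.of V) 0 := by rw [← hV0]; rfl
          rw [this, Matrix.det_updateRow_smul, Matrix.updateRow_eq_self]
        have hdet1 : ((Matrix.of V).updateRow 0 (g • m'')).det = g * (Matrix.of V).det := by
          have : (g • m'') = g • (Matrix.of V) 0 := by rw [← hV0]; rfl
          rw [this, Matrix.det_updateRow_smul, Matrix.updateRow_eq_self]
        rw [Matrix.det_succ_column_zero, Fin.sum_univ_succ, Fin.sum_univ_succ]
        have htail : ∀ i : Fin k, (Matrix.of w) (Fin.succ (Fin.succ i)) 0 = 0 := by
          intro i; simp [hwdef]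
        have hw00 : (Matrix.of w) 0 0 = m 0 := by simp [hwdef]
        have hw10 : (Matrix.of w) (Fin.succ 0) 0 = b := by simp [hwdef]
        rw [hminor0, hminor1, hdet0, hdet1, hw00, hw10]
        have : ∑ i : Fin k, (-1 : ℤ) ^ ((Fin.succ (Fin.succ i) : Fin (k+2)) : ℕ) *
            (Matrix.of w) (Fin.succ (Fin.succ i)) 0 *
            ((Matrix.of w).submatrix (Fin.succ (Fin.succ i)).succAbove Fin.succ).det = 0 := by
          apply Finset.sum_eq_zero
          intro i _
          rw [htail i]
          ring
        rw [this]
        have hfin : ((-1:ℤ)) ^ ((0 : Fin (k+2)) : ℕ) * m 0 * (a * (Matrix.of V).det) +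
            (((-1:ℤ)) ^ ((Fin.succ 0 : Fin (k+2)) : ℕ) * b * (g * (Matrix.of V).det) + 0) =
            (Matrix.of V).det := by
          simp only [Fin.val_zero, pow_zero, Fin.val_succ, pow_one]
          push_cast
          ring_nf
          linear_combination (Matrix.of V).det * key
        rw [hfin]
        exact hVdet

/-- Let `n ≥ 2` and `(m₁,…,mₙ)` a nonzero vector in `ℤⁿ` with
`gcd(m₁,…,mₙ) = 1`.  Then there are `n−1` further rows, each bounded entrywise by
`max |m_j| 1`, such that together with `m` (as row `0`) they form a matrix in `GLₙ(ℤ)`,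
i.e. a ℤ-basis of `ℤⁿ`. -/
theorem stmt0 (n : ℕ) (hn : 2 ≤ n) (m : Fin n → ℤ) (hm : m ≠ 0)
    (hgcd : Finset.univ.gcd m = 1) :
    ∃ v : Fin n → Fin n → ℤ,
      v ⟨0, by omega⟩ = m ∧
      (∀ i j : Fin n, i ≠ ⟨0, by omega⟩ → |v i j| ≤ max |m j| 1) ∧
      IsUnit (Matrix.det (Matrix.of v)) := by
  obtain ⟨k, rfl⟩ : ∃ k, n = k + 1 := ⟨n - 1, by omega⟩
  obtain ⟨v, h0, hb, hd⟩ := aux k m hgcd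
  have hz : (⟨0, by omega⟩ : Fin (k + 1)) = 0 := rfl
  exact ⟨v, hz ▸ h0, fun i j hi => hb i j (by rwa [hz] at hi), hd⟩
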